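/- For every m ≥ 1 and every k ≥ 2, the subspace Ω_{k-2}^{*,*}(CP^m)·(v_{2m}², w_{4m-1}) of Ω_k^{*,*}(CP^m) — the span of all monomials of length k divisible by v_{2m}² or by w_{4m-1} — is a subcomplex (closed under ∂), and it is acyclic: its cohomology vanishes in all degrees (the identity map of this subcomplex is chain homotopic to zero). -/

import Mathlib

/-!
# The (reduced) Chevalley–Eilenberg complex for `ℂP^m`

We model the free graded-commutative algebra on generators
`v_0, v_2, …, v_{2m}` (even, polynomial; `v_{2i}` has degree `2i`, weight `0`, length `1`) and
`w_{2m-1}, w_{2m+1}, …, w_{4m-1}` (odd, exterior; `w_{2m-1+2j}` has degree `2m-1+2j`,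
weight `1`, length `2`) by its monomial basis: a monomial is a pair `(e, S)` where
`e : Fin (m+1) → ℕ` records the exponents of the `v`'s (`e i` is the exponent of `v_{2i}`) and
`S : Finset (Fin (m+1))` records the set of `w`'s occurring (`j ∈ S` means `w_{2m-1+2j}` occurs).
An element of the algebra is a finitely supported `ℚ`-linear combination of monomials.
The differential is the degree `+1` derivation with `∂ v_{2i} = 0` and
`∂ w_{2i-1} = ∑_{a+b=i, 0 ≤ a,b ≤ m} v_{2a} v_{2b}` (for `m ≤ i ≤ 2m`), with the usual
Koszul signs.
-/

noncomputable section

/-- Monomials: exponents of the even generators `v_{2i}` and the set of odd generators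
`w_{2m-1+2j}` occurring. -/
abbrev CEMon (m : ℕ) : Type := (Fin (m + 1) → ℕ) × Finset (Fin (m + 1))

/-- The underlying `ℚ`-vector space of the Chevalley–Eilenberg algebra for `ℂP^m`:
finitely supported linear combinations of monomials. -/
abbrev CEAlg (m : ℕ) : Type := CEMon m →₀ ℚ

/-- Cohomological degree of a monomial: `v_{2i}` has degree `2i` and `w_{2m-1+2j}` has
degree `2m - 1 + 2j`. -/
def CEdeg (m : ℕ) (b : CEMon m) : ℕ :=
  (∑ i : Fin (m + 1), 2 * i.val * b.1 i) + ∑ j ∈ b.2, (2 * m + 2 * j.val - 1)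

/-- Length of a monomial: each `v` has length `1`, each `w` has length `2`. -/
def CElen (m : ℕ) (b : CEMon m) : ℕ := (∑ i : Fin (m + 1), b.1 i) + 2 * b.2.card

/-- Weight of a monomial: each `v` has weight `0`, each `w` has weight `1`. -/
def CEwt (m : ℕ) (b : CEMon m) : ℕ := b.2.card

/-- The differential on a monomial: apply `∂ w_{2(m+j)-1} = ∑_{a+b=m+j, 0 ≤ a,b ≤ m} v_{2a} v_{2b}`
to each odd factor in turn, with the Koszul sign `(-1)^{#{l ∈ S | l < j}}` (writing the odd
factors in increasing order). -/
def CEdMon (m : ℕ) (b : CEMon m) : CEAlg m :=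
  ∑ j ∈ b.2, ∑ a : Fin (m + 1),
    if h : j.val ≤ a.val then
      Finsupp.single
        (b.1 + Pi.single a 1 + Pi.single (⟨m + j.val - a.val, by omega⟩ : Fin (m + 1)) 1,
          b.2.erase j)
        ((-1 : ℚ) ^ (b.2.filter (fun l => l < j)).card)
    else 0

/-- The Chevalley–Eilenberg differential `∂`, as a linear map. -/
def CEd (m : ℕ) : CEAlg m →ₗ[ℚ] CEAlg m :=
  Finsupp.lift (CEAlg m) ℚ (CEMon m) (CEdMon m)

/-- `Ω_k^{i,ω}(ℂP^m)`: the span of the monomials of length `k`, cohomological degree `i` and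
weight `ω`. -/
def CEOmega (m k i ω : ℕ) : Submodule ℚ (CEAlg m) :=
  Finsupp.supported ℚ ℚ {b : CEMon m | CElen m b = k ∧ CEdeg m b = i ∧ CEwt m b = ω}

/-- A monomial is *bad* if it is divisible by `v_{2m}²` or by `w_{4m-1}`. -/
def CEBad (m : ℕ) (b : CEMon m) : Prop :=
  2 ≤ b.1 (Fin.last m) ∨ Fin.last m ∈ b.2

open Classical in
/-- The projection of the Chevalley–Eilenberg algebra onto the span of the *good* monomials
(those not divisible by `v_{2m}²` nor by `w_{4m-1}`), annihilating the bad monomials.  The span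
of the good monomials is canonically identified with the quotient of the algebra by the span of
the bad monomials. -/
def CEproj (m : ℕ) : CEAlg m →ₗ[ℚ] CEAlg m :=
  Finsupp.lift (CEAlg m) ℚ (CEMon m)
    (fun b => if CEBad m b then 0 else Finsupp.single b (1 : ℚ))

/-- The induced differential on the reduced complex `ʳΩ` (realized as the span of the good
monomials, canonically identified with the quotient by the span of the bad monomials). -/
def CErd (m : ℕ) : CEAlg m →ₗ[ℚ] CEAlg m := (CEproj m).comp (CEd m)

/-- `ʳΩ_k^{i,ω}(ℂP^m)`: the reduced complex (the quotient of `Ω_k^{i,ω}(ℂP^m)` by the span of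
the bad monomials, realized as the span of the good monomials of length `k`, degree `i` and
weight `ω`). -/
def CErOmega (m k i ω : ℕ) : Submodule ℚ (CEAlg m) :=
  Finsupp.supported ℚ ℚ
    {b : CEMon m | ¬ CEBad m b ∧ CElen m b = k ∧ CEdeg m b = i ∧ CEwt m b = ω}

/-- The degree-`i` part of the reduced complex `ʳΩ_k^{*,*}(ℂP^m)` (all weights together). -/
def CErOmegaDeg (m k i : ℕ) : Submodule ℚ (CEAlg m) :=
  Finsupp.supported ℚ ℚ {b : CEMon m | ¬ CEBad m b ∧ CElen m b = k ∧ CEdeg m b = i}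

/-- Cocycles of degree `i` in the reduced complex `ʳΩ_k^{*,*}(ℂP^m)`. -/
def CErCocycles (m k i : ℕ) : Submodule ℚ (CEAlg m) :=
  CErOmegaDeg m k i ⊓ LinearMap.ker (CErd m)

/-- The degree-`i` cohomology of the reduced complex `ʳΩ_k^{*,*}(ℂP^m)`:
cocycles of degree `i` modulo the image of the degree-`(i-1)` part under the differential. -/
abbrev CErCohomology (m k i : ℕ) : Type :=
  CErCocycles m k i ⧸
    Submodule.comap (CErCocycles m k i).subtype
      (Submodule.map (CErd m) (CErOmegaDeg m k (i - 1)))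

end

section Aux
variable {m : ℕ}

lemma finLast_lt_iff {x : Fin (m + 1)} : x < Fin.last m ↔ x ≠ Fin.last m :=
  ⟨ne_of_lt, fun h => lt_of_le_of_ne (Fin.le_last x) h⟩

lemma CEd_single (b : CEMon m) (c : ℚ) : CEd m (Finsupp.single b c) = c • CEdMon m b := by
  simp [CEd, Finsupp.lift_apply, Finsupp.sum_single_index]

open Classical in
/-- monomial-level homotopy -/
noncomputable def CEh1 (m : ℕ) (b : CEMon m) : CEAlg m :=
  if 2 ≤ b.1 (Fin.last m) ∧ Fin.last m ∉ b.2 then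
    Finsupp.single (b.1 - Pi.single (Fin.last m) 2, insert (Fin.last m) b.2)
      ((-1 : ℚ) ^ b.2.card)
  else 0

noncomputable def CEh (m : ℕ) : CEAlg m →ₗ[ℚ] CEAlg m :=
  Finsupp.lift (CEAlg m) ℚ (CEMon m) (CEh1 m)

lemma CEh_single (b : CEMon m) (c : ℚ) : CEh m (Finsupp.single b c) = c • CEh1 m b := by
  simp [CEh, Finsupp.lift_apply, Finsupp.sum_single_index]

lemma sum_pi_single_nat (a : Fin (m + 1)) (c : ℕ) :
    ∑ i : Fin (m + 1), (Pi.single a c : Fin (m + 1) → ℕ) i = c := by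
  simp [Pi.single_apply]

lemma sum2i_pi_single_nat (a : Fin (m + 1)) (c : ℕ) :
    ∑ i : Fin (m + 1), 2 * i.val * (Pi.single a c : Fin (m + 1) → ℕ) i = 2 * a.val * c := by
  simp [Pi.single_apply, mul_ite]

lemma sum_add_fn (e f : Fin (m + 1) → ℕ) :
    ∑ i : Fin (m + 1), (e + f) i = (∑ i : Fin (m + 1), e i) + ∑ i : Fin (m + 1), f i := by
  simp [Finset.sum_add_distrib]

lemma sum2i_add_fn (e f : Fin (m + 1) → ℕ) :
    ∑ i : Fin (m + 1), 2 * i.val * (e + f) i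
      = (∑ i : Fin (m + 1), 2 * i.val * e i) + ∑ i : Fin (m + 1), 2 * i.val * f i := by
  simp [Pi.add_apply, mul_add, Finset.sum_add_distrib]

end Aux

section Aux2
variable {m : ℕ}

lemma sub_two_decomp {e : Fin (m + 1) → ℕ} (he : 2 ≤ e (Fin.last m)) :
    e = (e - Pi.single (Fin.last m) 2) + Pi.single (Fin.last m) 2 := by
  funext i
  simp only [Pi.add_apply, Pi.sub_apply, Pi.single_apply]
  split_ifs with h
  · subst h; omega
  · omega

lemma lift_mem_supported (f : CEMon m → CEAlg m) {S T : Set (CEMon m)}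
    (hf : ∀ b ∈ S, f b ∈ Finsupp.supported ℚ ℚ T) {x : CEAlg m}
    (hx : x ∈ Finsupp.supported ℚ ℚ S) :
    Finsupp.lift (CEAlg m) ℚ (CEMon m) f x ∈ Finsupp.supported ℚ ℚ T := by
  rw [Finsupp.lift_apply]
  refine Submodule.finsuppSum_mem _ _ _ _ fun b hb => ?_
  exact Submodule.smul_mem _ _ (hf b ((Finsupp.mem_supported ℚ x).mp hx (Finsupp.mem_support_iff.mpr hb)))

lemma CEdMon_mem (hm : 1 ≤ m) {k i : ℕ} (b : CEMon m)
    (hb : CEBad m b ∧ CElen m b = k ∧ CEdeg m b = i) :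
    CEdMon m b ∈ Finsupp.supported ℚ ℚ
      {b' : CEMon m | CEBad m b' ∧ CElen m b' = k ∧ CEdeg m b' = i + 1} := by
  obtain ⟨e, S⟩ := b
  obtain ⟨hbad, hlen, hdeg⟩ := hb
  dsimp only [CElen, CEdeg, CEBad] at hbad hlen hdeg
  rw [CEdMon]
  refine Submodule.sum_mem _ fun j hj0 => Submodule.sum_mem _ fun a _ => ?_
  have hj : j ∈ S := hj0
  split
  · next h =>
    refine Finsupp.single_mem_supported ℚ _ ?_
    set c : Fin (m + 1) := ⟨m + j.val - a.val, by omega⟩ with hc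
    have hav : a.val ≤ m := by omega
    have hcard : 1 ≤ S.card := Finset.card_pos.mpr ⟨j, hj⟩
    have hwsum : (∑ l ∈ S.erase j, (2 * m + 2 * l.val - 1)) + (2 * m + 2 * j.val - 1)
        = ∑ l ∈ S, (2 * m + 2 * l.val - 1) := Finset.sum_erase_add _ _ hj
    refine ⟨?_, ?_, ?_⟩
    · -- badness
      rcases hbad with h2 | hlS
      · left
        simp only [Pi.add_apply]
        have : 2 ≤ e (Fin.last m) := h2
        have h1 : (0:ℕ) ≤ (Pi.single a 1 : Fin (m+1) → ℕ) (Fin.last m) := Nat.zero_le _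
        omega
      · by_cases hjl : j = Fin.last m
        · left
          have haL : a = Fin.last m := by
            apply Fin.ext; simp only [Fin.val_last]; subst hjl; simp only [Fin.val_last] at h; omega
          have hcL : c = Fin.last m := by
            apply Fin.ext; simp only [hc, Fin.val_last]; subst hjl; simp only [Fin.val_last] at h ⊢; omega
          simp only [Pi.add_apply, haL, hcL, Pi.single_eq_same]
          omega
        · right
          exact Finset.mem_erase.mpr ⟨fun hh => hjl (hh ▸ rfl) , hlS⟩
    · -- length
      dsimp only [CElen]
      rw [sum_add_fn, sum_add_fn, sum_pi_single_nat, sum_pi_single_nat,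
        Finset.card_erase_of_mem hj]
      omega
    · -- degree
      dsimp only [CEdeg]
      rw [sum2i_add_fn, sum2i_add_fn, sum2i_pi_single_nat, sum2i_pi_single_nat]
      have hcv : c.val = m + j.val - a.val := rfl
      omega
  · exact Submodule.zero_mem _

lemma CEh1_mem (hm : 1 ≤ m) {k i : ℕ} (b : CEMon m)
    (hb : CEBad m b ∧ CElen m b = k ∧ CEdeg m b = i) :
    CEh1 m b ∈ Finsupp.supported ℚ ℚ
      {b' : CEMon m | CEBad m b' ∧ CElen m b' = k ∧ CEdeg m b' = i - 1} := by
  obtain ⟨e, S⟩ := b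
  obtain ⟨hbad, hlen, hdeg⟩ := hb
  dsimp only [CElen, CEdeg, CEBad] at hbad hlen hdeg
  rw [CEh1]
  split
  · next h =>
    obtain ⟨h20, hlS0⟩ := h
    have h2 : 2 ≤ e (Fin.last m) := h20
    have hlS : Fin.last m ∉ S := hlS0
    refine Finsupp.single_mem_supported ℚ _ ?_
    have hdecomp := sub_two_decomp (e := e) h2
    set e' : Fin (m+1) → ℕ := e - Pi.single (Fin.last m) 2 with he'
    have hsum : ∑ x : Fin (m+1), e x = (∑ x : Fin (m+1), e' x) + 2 := by
      conv_lhs => rw [hdecomp]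
      rw [sum_add_fn, sum_pi_single_nat]
    have hsum2 : ∑ x : Fin (m+1), 2 * x.val * e x
        = (∑ x : Fin (m+1), 2 * x.val * e' x) + 2 * m * 2 := by
      conv_lhs => rw [hdecomp]
      rw [sum2i_add_fn, sum2i_pi_single_nat, Fin.val_last]
    refine ⟨Or.inr (Finset.mem_insert_self _ _), ?_, ?_⟩
    · dsimp only [CElen] at hlen ⊢
      rw [Finset.card_insert_of_notMem hlS]
      omega
    · dsimp only [CEdeg] at hdeg ⊢
      rw [Finset.sum_insert hlS, Fin.val_last]
      omega
  · exact Submodule.zero_mem _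

end Aux2

section Aux3
variable {m : ℕ}

lemma filter_lt_last {S : Finset (Fin (m+1))} (h : Fin.last m ∈ S) :
    S.filter (fun l => l < Fin.last m) = S.erase (Fin.last m) := by
  ext x
  simp [Finset.mem_filter, Finset.mem_erase, finLast_lt_iff, and_comm]

lemma filter_lt_last' {S : Finset (Fin (m+1))} (h : Fin.last m ∉ S) :
    S.filter (fun l => l < Fin.last m) = S := by
  refine Finset.filter_true_of_mem fun x hx => ?_
  exact finLast_lt_iff.mpr (fun hh => h (hh ▸ hx))

lemma sub_comm_add (e : Fin (m+1) → ℕ) (h2 : 2 ≤ e (Fin.last m)) (u v : Fin (m+1)) :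
    e + Pi.single u 1 + Pi.single v 1 - Pi.single (Fin.last m) 2
      = (e - Pi.single (Fin.last m) 2) + Pi.single u 1 + Pi.single v 1 := by
  funext x
  simp only [Pi.add_apply, Pi.sub_apply, Pi.single_apply]
  by_cases hx : x = Fin.last m
  · subst hx; split_ifs <;> omega
  · rw [if_neg hx]; split_ifs <;> omega

lemma homotopy (hm : 1 ≤ m) (b : CEMon m) (hb : CEBad m b) :
    CEd m (CEh m (Finsupp.single b 1)) + CEh m (CEd m (Finsupp.single b 1)) =
      Finsupp.single b 1 := by
  obtain ⟨e, S⟩ := b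
  rw [CEh_single, CEd_single, one_smul, one_smul]
  by_cases hlS : Fin.last m ∈ S
  · -- Case A : last ∈ S, so h kills the monomial and h∂ = id on it
    have h1 : CEh1 m (e, S) = 0 := by
      rw [CEh1, if_neg]; rintro ⟨-, h⟩; exact h hlS
    rw [h1, map_zero, zero_add]
    rw [CEdMon, map_sum]
    rw [Finset.sum_eq_single_of_mem (Fin.last m) hlS (fun j hj hne => ?_)]
    · -- the j = last term
      rw [map_sum, Fintype.sum_eq_single (Fin.last m) (fun a hne => ?_)]
      · rw [dif_pos (le_refl _)]
        rw [CEh_single]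
        have hidx : (⟨m + (Fin.last m).val - (Fin.last m).val, by omega⟩ : Fin (m+1))
            = Fin.last m := by
          apply Fin.ext; simp
        rw [CEh1, if_pos]
        · have hfe : (e, S).1 + Pi.single (Fin.last m) 1 + Pi.single (Fin.last m) 1
              - Pi.single (Fin.last m) 2 = e := by
            funext x
            simp only [Pi.add_apply, Pi.sub_apply, Pi.single_apply]
            split_ifs <;> omega
          rw [hidx, hfe, Finset.insert_erase hlS, filter_lt_last hlS]
          rw [Finsupp.smul_single, smul_eq_mul, ← mul_pow]
          norm_num
        · constructor
          · rw [hidx]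
            simp only [Pi.add_apply, Pi.single_eq_same]
            omega
          · simp
      · rw [dif_neg (fun hcon => hne (Fin.ext (by
          have := a.isLt
          simp only [Fin.val_last] at hcon ⊢
          omega)))]
        exact map_zero _
    · -- other j ∈ S give zero
      rw [map_sum]
      refine Finset.sum_eq_zero fun a _ => ?_
      rw [apply_dite (CEh m), dite_eq_iff']
      refine ⟨fun h => ?_, fun h => map_zero _⟩
      rw [CEh_single]
      have : CEh1 m ((e, S).1 + Pi.single a 1 + Pi.single (⟨m + j.val - a.val, by omega⟩ : Fin (m+1)) 1, (e, S).2.erase j) = 0 := by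
        rw [CEh1, if_neg]
        rintro ⟨-, hcon⟩
        exact hcon (Finset.mem_erase.mpr ⟨fun hh => hne (hh ▸ rfl), hlS⟩)
      rw [this, smul_zero]
  · -- Case B : last ∉ S, so exponent of v_{2m} is ≥ 2
    have h2 : 2 ≤ e (Fin.last m) := by
      rcases hb with h | h
      · exact h
      · exact absurd h hlS
    rw [show CEh1 m ((e,S) : CEMon m) = CEh m (Finsupp.single ((e,S) : CEMon m) (1:ℚ)) from by
        rw [CEh_single, one_smul],
      show CEdMon m ((e,S) : CEMon m) = CEd m (Finsupp.single ((e,S) : CEMon m) (1:ℚ)) from by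
        rw [CEd_single, one_smul]]
    have hfilS : ∀ j ∈ S, (insert (Fin.last m) S).filter (fun l => l < j) = S.filter (fun l => l < j) := by
      intro j hj
      rw [Finset.filter_insert, if_neg (not_lt.mpr (Fin.le_last j))]
    have H1 : CEd m (CEh m (Finsupp.single ((e, S) : CEMon m) (1:ℚ)))
        = Finsupp.single ((e, S) : CEMon m) (1:ℚ) + ∑ j ∈ S, ∑ a : Fin (m+1),
            (if h : j.val ≤ a.val then
              Finsupp.single (((e - Pi.single (Fin.last m) 2) + Pi.single a 1
                  + Pi.single (⟨m + j.val - a.val, by omega⟩ : Fin (m+1)) 1,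
                insert (Fin.last m) (S.erase j)) : CEMon m)
                ((-1:ℚ)^(S.card) * (-1:ℚ)^((S.filter (fun l => l < j)).card))
            else 0) := by
      rw [CEh_single, one_smul, CEh1, if_pos ⟨h2, hlS⟩]
      try dsimp only
      rw [CEd_single, CEdMon]
      try dsimp only
      rw [Finset.sum_insert hlS, smul_add]
      congr 1
      · rw [Fintype.sum_eq_single (Fin.last m) (fun a hne => ?_)]
        · rw [dif_pos (le_refl _)]
          have hidx : (⟨m + (Fin.last m).val - (Fin.last m).val, by omega⟩ : Fin (m+1))
              = Fin.last m := by apply Fin.ext; simp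
          have hfe : (e - Pi.single (Fin.last m) 2) + Pi.single (Fin.last m) 1
              + Pi.single (Fin.last m) 1 = e := by
            funext x
            simp only [Pi.add_apply, Pi.sub_apply, Pi.single_apply]
            split_ifs with hx
            · subst hx; omega
            · omega
          have hers : (insert (Fin.last m) S).erase (Fin.last m) = S :=
            Finset.erase_insert hlS
          have hfil : (insert (Fin.last m) S).filter (fun l => l < Fin.last m) = S := by
            rw [Finset.filter_insert, if_neg (lt_irrefl _), filter_lt_last' hlS]
          rw [hidx, hfe, hers, hfil, Finsupp.smul_single, smul_eq_mul, ← mul_pow]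
          norm_num
        · rw [dif_neg (fun hcon => hne (Fin.ext (by
            have := a.isLt
            simp only [Fin.val_last] at hcon ⊢
            omega)))]
      · rw [Finset.smul_sum]
        refine Finset.sum_congr rfl fun j hj => ?_
        rw [Finset.smul_sum]
        refine Finset.sum_congr rfl fun a _ => ?_
        rw [apply_dite (fun z : CEAlg m => ((-1:ℚ)^S.card) • z)]
        try dsimp only
        split
        · next h =>
          rw [Finsupp.smul_single, smul_eq_mul,
            Finset.erase_insert_of_ne (fun hh => hlS (by rw [hh]; exact hj)), hfilS j hj]
        · exact smul_zero _
    have H2 : CEh m (CEd m (Finsupp.single ((e, S) : CEMon m) (1:ℚ)))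
        = ∑ j ∈ S, ∑ a : Fin (m+1),
            (if h : j.val ≤ a.val then
              Finsupp.single (((e - Pi.single (Fin.last m) 2) + Pi.single a 1
                  + Pi.single (⟨m + j.val - a.val, by omega⟩ : Fin (m+1)) 1,
                insert (Fin.last m) (S.erase j)) : CEMon m)
                ((-1:ℚ)^((S.filter (fun l => l < j)).card) * (-1:ℚ)^((S.erase j).card))
            else 0) := by
      rw [CEd_single, one_smul, CEdMon]
      try dsimp only
      rw [map_sum]
      refine Finset.sum_congr rfl fun j hj => ?_
      rw [map_sum]
      refine Finset.sum_congr rfl fun a _ => ?_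
      rw [apply_dite (CEh m)]
      try dsimp only
      split
      · next h =>
        rw [CEh_single, CEh1, if_pos]
        · try dsimp only
          rw [sub_comm_add e h2, Finsupp.smul_single, smul_eq_mul]
        · constructor
          · try dsimp only
            simp only [Pi.add_apply]
            omega
          · exact fun hcon => hlS (Finset.mem_of_mem_erase hcon)
      · exact map_zero _
    rw [H1, H2, add_assoc, ← Finset.sum_add_distrib]
    convert add_zero _
    refine Finset.sum_eq_zero fun j hj => ?_
    rw [← Finset.sum_add_distrib]
    refine Finset.sum_eq_zero fun a _ => ?_
    split
    · next h =>
      rw [← Finsupp.single_add]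
      rw [Finsupp.single_eq_zero]
      obtain ⟨c, hc⟩ : ∃ c, S.card = c + 1 :=
        ⟨S.card - 1, by have := Finset.card_pos.mpr ⟨j, hj⟩; omega⟩
      rw [Finset.card_erase_of_mem hj, hc]
      simp only [Nat.add_sub_cancel]
      ring
    · exact add_zero 0


end Aux3

section Aux4
variable {m : ℕ}

lemma homotopy_supported (hm : 1 ≤ m) {S : Set (CEMon m)} (hS : ∀ b ∈ S, CEBad m b)
    {x : CEAlg m} (hx : x ∈ Finsupp.supported ℚ ℚ S) :
    CEd m (CEh m x) + CEh m (CEd m x) = x := by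
  have key : (CEd m ∘ₗ CEh m + CEh m ∘ₗ CEd m) x = x := by
    conv_lhs => rw [← Finsupp.sum_single x]
    conv_rhs => rw [← Finsupp.sum_single x]
    rw [map_finsuppSum]
    rw [Finsupp.sum, Finsupp.sum]
    refine Finset.sum_congr rfl fun b hb => ?_
    · have hbS : CEBad m b := hS b ((Finsupp.mem_supported ℚ x).mp hx hb)
      have hsm : Finsupp.single b (x b) = (x b) • Finsupp.single b (1:ℚ) := by
        rw [Finsupp.smul_single, smul_eq_mul, mul_one]
      rw [hsm, map_smul]
      have := homotopy hm b hbS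
      simp only [LinearMap.add_apply, LinearMap.comp_apply]
      rw [this]
  simpa using key

end Aux4


/-- For every `m ≥ 1` and `k ≥ 2`, the span of the monomials of length `k`
divisible by `v_{2m}²` or by `w_{4m-1}` is a subcomplex of `Ω_k^{*,*}(ℂP^m)` (closed under `∂`),
and it is acyclic: its cohomology vanishes in all degrees. -/
theorem bad_subcomplex_acyclic (m k : ℕ) (hm : 1 ≤ m) (hk : 2 ≤ k) :
    (∀ i : ℕ, ∀ x ∈ Finsupp.supported ℚ ℚ
        {b : CEMon m | CEBad m b ∧ CElen m b = k ∧ CEdeg m b = i},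
      CEd m x ∈ Finsupp.supported ℚ ℚ
        {b : CEMon m | CEBad m b ∧ CElen m b = k ∧ CEdeg m b = i + 1}) ∧
    (∀ i : ℕ, ∀ x ∈ Finsupp.supported ℚ ℚ
        {b : CEMon m | CEBad m b ∧ CElen m b = k ∧ CEdeg m b = i},
      CEd m x = 0 →
      ∃ y ∈ Finsupp.supported ℚ ℚ
          {b : CEMon m | CEBad m b ∧ CElen m b = k ∧ CEdeg m b = i - 1},
        CEd m y = x) := by
  constructor
  · intro i x hx
    exact lift_mem_supported (CEdMon m) (fun b hb => CEdMon_mem hm b hb) hx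
  · intro i x hx hdx
    refine ⟨CEh m x, ?_, ?_⟩
    · exact lift_mem_supported (CEh1 m) (fun b hb => CEh1_mem hm b hb) hx
    · have H := homotopy_supported hm (fun b hb => hb.1) hx
      rw [hdx, map_zero, add_zero] at H
      exact H
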